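/- Every 2-torsion-free semiprime Lie solvable ring is commutative. -/

import Mathlib

/-- The Lie derived series of a (possibly non-unital) ring:
`lieDelta R 0 = R`, and `lieDelta R (n+1)` is the additive subgroup generated by
all `[a, b] = a*b - b*a` with `a, b ∈ lieDelta R n`. -/
def lieDelta (R : Type*) [NonUnitalRing R] : ℕ → AddSubgroup R
  | 0 => ⊤
  | n + 1 => AddSubgroup.closure
      {z : R | ∃ a ∈ lieDelta R n, ∃ b ∈ lieDelta R n, z = a * b - b * a}

/-- A ring is Lie solvable if `δ_n R = 0` for some `n`. -/
def IsLieSolvableRing (R : Type*) [NonUnitalRing R] : Prop := ∃ n : ℕ, lieDelta R n = ⊥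

section Aux
variable {R : Type*} [NonUnitalRing R]

/-- If `ad u` squares to zero in a 2-torsion-free semiprime ring, then `u` is central. -/
lemma lemA (h2 : ∀ x : R, 2 • x = 0 → x = 0)
    (hsemi : ∀ a : R, (∀ r : R, a * r * a = 0) → a = 0)
    (u : R) (hu : ∀ r : R, u * (u * r - r * u) - (u * r - r * u) * u = 0) :
    ∀ r : R, u * r = r * u := by
  set d : R → R := fun r => u * r - r * u with hd
  have hdd : ∀ r, d (d r) = 0 := hu
  have h1 : ∀ r s : R, d r * d s = 0 := by
    intro r s
    have e : 2 • (d r * d s) = d (d (r * s)) - d (d r) * s - r * d (d s) := by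
      simp only [hd]; noncomm_ring
    rw [hdd, hdd, hdd] at e
    simp only [zero_mul, mul_zero, sub_zero, zero_sub, neg_zero, sub_self] at e
    exact h2 _ e
  intro r
  have h3 : ∀ s : R, d r * s * d r = 0 := by
    intro s
    have e : d r * s * d r = d (r * s) * d r - r * (d s * d r) := by
      simp only [hd]; noncomm_ring
    rw [h1, h1, mul_zero, sub_zero] at e
    exact e
  have h4 := hsemi _ h3
  simp only [hd] at h4
  exact sub_eq_zero.mp h4

/-- A Lie ideal whose commutators are central is itself central
(2-torsion-free semiprime case). -/
lemma lemB (h2 : ∀ x : R, 2 • x = 0 → x = 0)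
    (hsemi : ∀ a : R, (∀ r : R, a * r * a = 0) → a = 0)
    (U : AddSubgroup R)
    (hideal : ∀ u ∈ U, ∀ r : R, u * r - r * u ∈ U)
    (hZ : ∀ a ∈ U, ∀ b ∈ U, ∀ r : R, (a * b - b * a) * r = r * (a * b - b * a)) :
    ∀ u ∈ U, ∀ r : R, u * r = r * u := by
  intro u hu
  apply lemA h2 hsemi u
  intro r
  set b : R := u * r - r * u with hb
  have hbU : b ∈ U := hideal u hu r
  set c : R := u * b - b * u with hc
  have hcZ : ∀ s : R, c * s = s * c := hZ u hu b hbU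
  -- c * u is central, since c * u = [u, [u, r*u]] ∈ [U, U]
  have hb' : u * (r * u) - (r * u) * u ∈ U := hideal u hu (r * u)
  have hcuZ : ∀ s : R, (c * u) * s = s * (c * u) := by
    have key : c * u =
        u * (u * (r * u) - (r * u) * u) - (u * (r * u) - (r * u) * u) * u := by
      simp only [hc, hb]; noncomm_ring
    intro s
    rw [key]
    exact hZ u hu _ hb' s
  -- hence c * [u, a] = 0 for all a
  have hca : ∀ a : R, c * (u * a - a * u) = 0 := by
    intro a
    have e1 : c * (u * a) = (c * u) * a := (mul_assoc c u a).symm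
    have e2 : c * (a * u) = (c * a) * u := (mul_assoc c a u).symm
    calc c * (u * a - a * u) = (c * u) * a - (c * a) * u := by
          rw [mul_sub, e1, e2]
      _ = a * (c * u) - (a * c) * u := by rw [hcuZ a, hcZ a]
      _ = 0 := by rw [mul_assoc]; exact sub_self _
  -- c² = 0
  have hc2 : c * c = 0 := by
    have := hca b
    rw [← hc] at this
    exact this
  -- c s c = 0 for all s, so c = 0 by semiprimeness
  have : ∀ s : R, c * s * c = 0 := by
    intro s
    rw [hcZ s, mul_assoc, hc2, mul_zero]
  have hc0 : c = 0 := hsemi c this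
  simpa [hc, hb] using hc0

/-- Each term of the Lie derived series is a Lie ideal of `R`. -/
lemma lieDelta_lieIdeal : ∀ k : ℕ, ∀ x ∈ lieDelta R k, ∀ r : R,
    x * r - r * x ∈ lieDelta R k := by
  intro k
  induction k with
  | zero => intro x _ r; exact AddSubgroup.mem_top _
  | succ n ih =>
    intro x hx r
    rw [lieDelta] at hx ⊢
    induction hx using AddSubgroup.closure_induction with
    | mem z hz =>
        obtain ⟨a, ha, b, hb, rfl⟩ := hz
        have jac : (a * b - b * a) * r - r * (a * b - b * a) =
            ((a * r - r * a) * b - b * (a * r - r * a)) +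
            (a * (b * r - r * b) - (b * r - r * b) * a) := by noncomm_ring
        rw [jac]
        exact add_mem
          (AddSubgroup.subset_closure ⟨a * r - r * a, ih a ha r, b, hb, rfl⟩)
          (AddSubgroup.subset_closure ⟨a, ha, b * r - r * b, ih b hb r, rfl⟩)
    | zero => simpa using (AddSubgroup.closure _).zero_mem
    | add z w _ _ hz hw =>
        have e : (z + w) * r - r * (z + w) = (z * r - r * z) + (w * r - r * w) := by
          noncomm_ring
        rw [e]; exact add_mem hz hw
    | neg z _ hz =>
        have e : (-z) * r - r * (-z) = -(z * r - r * z) := by noncomm_ring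
        rw [e]; exact neg_mem hz

/-- If `lieDelta R (k+1)` is central, so is `lieDelta R k`. -/
lemma stepdown (h2 : ∀ x : R, 2 • x = 0 → x = 0)
    (hsemi : ∀ a : R, (∀ r : R, a * r * a = 0) → a = 0)
    (k : ℕ) (h : ∀ x ∈ lieDelta R (k + 1), ∀ r : R, x * r = r * x) :
    ∀ x ∈ lieDelta R k, ∀ r : R, x * r = r * x := by
  apply lemB h2 hsemi (lieDelta R k) (lieDelta_lieIdeal k)
  intro a ha b hb r
  apply h
  rw [lieDelta]
  exact AddSubgroup.subset_closure ⟨a, ha, b, hb, rfl⟩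

end Aux

/-- Every 2-torsion-free semiprime Lie solvable ring is commutative. -/
theorem stmt2 (R : Type*) [NonUnitalRing R]
    (h2 : ∀ x : R, 2 • x = 0 → x = 0)
    (hsemi : ∀ a : R, (∀ r : R, a * r * a = 0) → a = 0)
    (hsol : IsLieSolvableRing R) :
    ∀ x y : R, x * y = y * x := by
  obtain ⟨n, hn⟩ := hsol
  have key : ∀ j : ℕ, ∀ x ∈ lieDelta R (n - j), ∀ r : R, x * r = r * x := by
    intro j
    induction j with
    | zero =>
        intro x hx r
        simp only [Nat.sub_zero, hn, AddSubgroup.mem_bot] at hx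
        simp [hx]
    | succ m ih =>
        rcases Nat.lt_or_ge m n with hlt | hge
        · have e : n - m = (n - (m + 1)) + 1 := by omega
          rw [e] at ih
          exact stepdown h2 hsemi _ ih
        · have e : n - (m + 1) = n - m := by omega
          rw [e]; exact ih
  intro x y
  have := key n x (by simp [Nat.sub_self]; exact AddSubgroup.mem_top x) y
  exact this
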